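/- Let W be a finite-dimensional real vector space, v_i (i ∈ I) finitely many vectors, λ ∈ ℝ_{≥0}{v_i}, and I' the positive envelope of λ (the support of a nonnegative representation of λ with maximal number of positive coefficients). Then for any i ∈ I, if v_i lies in the linear span of {v_j : j ∈ I'}, then i ∈ I'. -/

import Mathlib

/-- Let `W` be a finite-dimensional real vector space, `v i` (`i ∈ I`) finitely many
vectors, `lam ∈ ℝ_{≥0}{v i}`, and `I' = {i | 0 < c i}` the positive envelope of `lam`
(the support of a nonnegative representation of `lam` with maximal number of positive
coefficients).  Then for any `i ∈ I`, if `v i` lies in the linear span of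
`{v j : j ∈ I'}`, then `i ∈ I'`. -/
theorem positive_envelope_span_mem {W : Type*} [AddCommGroup W] [Module ℝ W]
    [FiniteDimensional ℝ W] {I : Type*} [Fintype I] (v : I → W) (lam : W)
    (c : I → ℝ) (hc0 : ∀ i, 0 ≤ c i) (hc : lam = ∑ i, c i • v i)
    (hmax : ∀ d : I → ℝ, (∀ i, 0 ≤ d i) → lam = ∑ i, d i • v i →
      Nat.card {i : I // 0 < d i} ≤ Nat.card {i : I // 0 < c i}) :
    ∀ i : I, v i ∈ Submodule.span ℝ (v '' {j : I | 0 < c j}) → i ∈ {j : I | 0 < c j} := by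
  classical
  intro i hi
  by_contra hci
  simp only [Set.mem_setOf_eq] at hci
  -- get a representation of v i over the positive support
  have h1 : v '' {j : I | 0 < c j} = Set.range (fun j : {j : I // 0 < c j} => v (j : I)) := by
    ext w
    constructor
    · rintro ⟨x, hx, rfl⟩; exact ⟨⟨x, hx⟩, rfl⟩
    · rintro ⟨⟨x, hx⟩, rfl⟩; exact ⟨x, hx, rfl⟩
  rw [h1, Finsupp.mem_span_range_iff_exists_finsupp] at hi
  obtain ⟨a, ha⟩ := hi
  set A : I → ℝ := fun j => if h : 0 < c j then a ⟨j, h⟩ else 0 with hAdef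
  have hA : ∑ j, A j • v j = v i := by
    rw [← ha, Finsupp.sum_fintype _ _ (by intro j; simp)]
    rw [← Finset.sum_filter_of_ne (p := fun j => 0 < c j)
      (f := fun j => A j • v j) (by
        intro j _ hne
        by_contra h
        exact hne (by simp [hAdef, dif_neg h]))]
    rw [Finset.sum_subtype (p := fun j => 0 < c j) (Finset.univ.filter (fun j => 0 < c j))
      (fun x => by simp) (fun j => A j • v j)]
    refine Finset.sum_congr rfl ?_
    rintro ⟨j, hj⟩ _
    simp [hAdef, dif_pos hj]
  have hAi : A i = 0 := by simp [hAdef, dif_neg hci]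
  -- choose epsilon
  set ε : ℝ := Finset.univ.inf' ⟨i, Finset.mem_univ i⟩
      (fun j => if 0 < c j then c j / (|A j| + 1) else 1) with hε
  have habs : ∀ j : I, (0:ℝ) < |A j| + 1 := fun j => by positivity
  have hεpos : 0 < ε := by
    rw [hε]; refine (Finset.lt_inf'_iff _).2 ?_
    intro j _
    split
    · exact div_pos (by assumption) (habs j)
    · norm_num
  have hεsmall : ∀ j : I, 0 < c j → ε * A j < c j := by
    intro j hj
    have h2 : ε ≤ c j / (|A j| + 1) := by
      have := Finset.inf'_le (b := j)
        (fun j => if 0 < c j then c j / (|A j| + 1) else 1) (Finset.mem_univ j)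
      rwa [if_pos hj] at this
    calc ε * A j ≤ ε * |A j| := by
          exact mul_le_mul_of_nonneg_left (le_abs_self _) hεpos.le
      _ ≤ (c j / (|A j| + 1)) * |A j| :=
          mul_le_mul_of_nonneg_right h2 (abs_nonneg _)
      _ < c j := by
          rw [div_mul_eq_mul_div, div_lt_iff₀ (habs j)]
          nlinarith [abs_nonneg (A j)]
  -- the perturbed coefficients
  set d : I → ℝ := fun j => c j - ε * A j + (if j = i then ε else 0) with hd
  have hd0 : ∀ j, 0 ≤ d j := by
    intro j
    by_cases hj : 0 < c j
    · have := hεsmall j hj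
      simp only [hd]
      split <;> [linarith; linarith]
    · have hcj : c j = 0 := le_antisymm (not_lt.mp hj) (hc0 j)
      have hAj : A j = 0 := by simp [hAdef, dif_neg hj]
      simp only [hd, hcj, hAj, mul_zero, sub_zero, zero_add]
      split
      · exact hεpos.le
      · exact le_rfl
  have hdpos : ∀ j, 0 < c j → 0 < d j := by
    intro j hj
    have := hεsmall j hj
    simp only [hd]
    split <;> [linarith; linarith]
  have hdi : 0 < d i := by
    have hcival : c i = 0 := le_antisymm (not_lt.mp hci) (hc0 i)
    simp [hd, hcival, hAi, hεpos]
  have hrep : lam = ∑ j, d j • v j := by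
    have key : ∀ j : I, d j • v j
        = c j • v j - ε • (A j • v j) + (if j = i then ε • v i else 0) := by
      intro j
      by_cases h : j = i <;>
        simp [hd, h, add_smul, sub_smul, mul_smul]
    symm
    calc ∑ j, d j • v j
        = ∑ j, (c j • v j - ε • (A j • v j) + (if j = i then ε • v i else 0)) :=
          Finset.sum_congr rfl fun j _ => key j
      _ = ∑ j, c j • v j - ε • ∑ j, A j • v j + ε • v i := by
          rw [Finset.sum_add_distrib, Finset.sum_sub_distrib, ← Finset.smul_sum]
          simp
      _ = lam := by rw [hA, hc]; abel
  -- strict inclusion of supports gives a contradiction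
  have hsub : {j : I | 0 < c j} ⊂ {j : I | 0 < d j} := by
    constructor
    · intro j hj; exact hdpos j hj
    · intro h
      exact hci (h hdi)
  have hcard := Set.ncard_lt_ncard hsub (Set.toFinite _)
  have hle := hmax d hd0 hrep
  rw [show {j : I // 0 < d j} = ↥{j : I | 0 < d j} from rfl,
    show {j : I // 0 < c j} = ↥{j : I | 0 < c j} from rfl,
    Nat.card_coe_set_eq, Nat.card_coe_set_eq] at hle
  omega
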